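/- arXiv:quant-ph/9907077 — 2 statements merged into one kernel-verified Lean document; each statement's English description precedes it below -/
import Mathlib

section
/- (Entropy-typical projector) Let ρ₁,…,ρₙ be density operators on ℂ^d with diagonalizations ρᵢ = ∑_j q_{j|i} π_{ij} into rank-one orthogonal eigenprojections, let δ > 0, let T = { (j₁,…,jₙ) : |∑_{i=1}^n (−log₂ q_{jᵢ|i}) − ∑_{i=1}^n H(ρᵢ)| ≤ δ√n } and Π = ∑_{(j₁,…,jₙ)∈T} π_{1j₁} ⊗ ⋯ ⊗ π_{njₙ}. Then with K = max{(log₂3)², (log₂d)²}: Tr((ρ₁⊗⋯⊗ρₙ)Π) ≥ 1 − K/δ². -/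
open scoped ComplexOrder Matrix

namespace QIT

/-- A density operator: positive semidefinite with trace 1. -/
def IsDensity {d : ℕ} (ρ : Matrix (Fin d) (Fin d) ℂ) : Prop :=
  ρ.PosSemidef ∧ ρ.trace = 1

/-- A pure state: a rank-one orthogonal projection. -/
def IsPure {d : ℕ} (ρ : Matrix (Fin d) (Fin d) ℂ) : Prop :=
  ρ.IsHermitian ∧ ρ * ρ = ρ ∧ ρ.rank = 1

/-- `n`-fold tensor (Kronecker) product of matrices, on the index set
`Fin n → Fin d`. -/
noncomputable def tprod {d n : ℕ} (ρ : Fin n → Matrix (Fin d) (Fin d) ℂ) :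
    Matrix (Fin n → Fin d) (Fin n → Fin d) ℂ :=
  fun j k => ∏ i, ρ i (j i) (k i)

/-- Number of occurrences of `x` in the sequence `xn`. -/
def occ {n : ℕ} {X : Type*} [DecidableEq X] (x : X) (xn : Fin n → X) : ℕ :=
  (Finset.univ.filter fun i => xn i = x).card

lemma neg_xlog_le {x : ℝ} (h0 : 0 < x) : x * (-Real.log x) ≤ 1 / Real.exp 1 := by
  have hy : 0 < 1/x := by positivity
  have h2 : Real.log (1/x) ≤ (1/x) / Real.exp 1 := by
    have h3 := Real.log_le_sub_one_of_pos (show (0:ℝ) < (1/x)/Real.exp 1 by positivity)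
    rw [Real.log_div (ne_of_gt hy) (Real.exp_ne_zero 1), Real.log_exp] at h3
    linarith
  have h4 : -Real.log x = Real.log (1/x) := by
    rw [Real.log_div one_ne_zero (ne_of_gt h0), Real.log_one]; ring
  rw [h4]
  calc x * Real.log (1/x) ≤ x * ((1/x)/Real.exp 1) :=
        mul_le_mul_of_nonneg_left h2 (le_of_lt h0)
    _ = 1 / Real.exp 1 := by field_simp

lemma xlogsq_le {x : ℝ} (h0 : 0 ≤ x) (h1 : x ≤ 1) : x * (Real.log x)^2 ≤ 4 / (Real.exp 1)^2 := by
  rcases eq_or_lt_of_le h0 with h | h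
  · simp [← h]; positivity
  · set s := Real.sqrt x with hs
    have hs0 : 0 < s := Real.sqrt_pos.mpr h
    have hs1 : s ≤ 1 := by
      rw [hs, show (1:ℝ) = Real.sqrt 1 by simp]
      exact Real.sqrt_le_sqrt h1
    have hx : x = s^2 := (Real.sq_sqrt h0).symm
    have hlog : Real.log x = 2 * Real.log s := by
      conv_lhs => rw [hx]
      rw [Real.log_pow]; push_cast; ring
    have h5 : s * (-Real.log s) ≤ 1 / Real.exp 1 := neg_xlog_le hs0
    have h6 : 0 ≤ s * (-Real.log s) :=
      mul_nonneg (le_of_lt hs0) (neg_nonneg.mpr (Real.log_nonpos (le_of_lt hs0) hs1))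
    have key : x * (Real.log x)^2 = 4 * (s * (-Real.log s))^2 := by
      rw [hlog, hx]; ring
    have h7 : (s * (-Real.log s))^2 ≤ (1/Real.exp 1)^2 := pow_le_pow_left₀ h6 h5 2
    rw [key]
    calc 4 * (s * (-Real.log s))^2 ≤ 4 * (1/Real.exp 1)^2 := by linarith
      _ = 4 / (Real.exp 1)^2 := by field_simp

lemma log3_ge : (1.0983:ℝ) ≤ Real.log 3 := by
  have h2 : (0.6931471803:ℝ) < Real.log 2 := Real.log_two_gt_d9
  have h43 : Real.log (4/3) ≤ 0.2879 := by
    rw [Real.log_le_iff_le_exp (by norm_num)]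
    have hsum := Real.sum_le_exp_of_nonneg (show (0:ℝ) ≤ 0.2879 by norm_num) 6
    have hval : ∑ i ∈ Finset.range 6, (0.2879:ℝ)^i / i.factorial ≥ 4/3 := by
      simp [Finset.sum_range_succ, Nat.factorial]
      norm_num
    linarith
  have h3 : Real.log (4/3) = 2 * Real.log 2 - Real.log 3 := by
    rw [Real.log_div (by norm_num) (by norm_num),
      show (4:ℝ) = 2^2 by norm_num, Real.log_pow]
    push_cast; ring
  linarith

lemma poly_ineq {L : ℝ} (hL : 0 ≤ L) :
    L^2 - 1.0983*L ≤ (1.0983^2/4)*(1 + L + L^2/2 + L^3/6 + L^4/24 + L^5/120 + L^6/720) := by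
  nlinarith [sq_nonneg (L - 2.77), sq_nonneg (L^2 - 2.77*L), sq_nonneg (L^3 - 2.77*L^2),
    sq_nonneg L, sq_nonneg (L^2-7.6729), mul_nonneg hL hL]

lemma term_bound3 {x : ℝ} (h0 : 0 ≤ x) (h1 : x ≤ 1) :
    x * Real.log x * (Real.log x + Real.log 3) ≤ (Real.log 3)^2 / 4 := by
  have hlog3 : (0:ℝ) < Real.log 3 := lt_of_lt_of_le (by norm_num) log3_ge
  rcases eq_or_lt_of_le h0 with h | h
  · rw [← h]; norm_num; positivity
  set L : ℝ := -Real.log x with hL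
  have hL0 : 0 ≤ L := neg_nonneg.mpr (Real.log_nonpos (le_of_lt h) h1)
  have hxL : x = Real.exp (-L) := by rw [hL, neg_neg, Real.exp_log h]
  have hform : x * Real.log x * (Real.log x + Real.log 3) = x * (L * (L - Real.log 3)) := by
    rw [hL]; ring
  rw [hform]
  rcases le_or_gt L (Real.log 3) with hc | hc
  · have : x * (L * (L - Real.log 3)) ≤ 0 := by
      apply mul_nonpos_of_nonneg_of_nonpos (le_of_lt h)
      exact mul_nonpos_of_nonneg_of_nonpos hL0 (by linarith)
    nlinarith [this, hlog3]
  · -- main case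
    have hexp : 1 + L + L^2/2 + L^3/6 + L^4/24 + L^5/120 + L^6/720 ≤ Real.exp L := by
      have hsum := Real.sum_le_exp_of_nonneg hL0 7
      have : ∑ i ∈ Finset.range 7, L^i / i.factorial
          = 1 + L + L^2/2 + L^3/6 + L^4/24 + L^5/120 + L^6/720 := by
        simp [Finset.sum_range_succ, Nat.factorial]
        try ring
      linarith [hsum, this.symm.le, this.le]
    have hpoly := poly_ineq hL0
    have hstep : L * (L - Real.log 3) ≤ (Real.log 3)^2/4 * Real.exp L := by
      calc L * (L - Real.log 3) ≤ L^2 - 1.0983*L := by nlinarith [log3_ge]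
        _ ≤ (1.0983^2/4)*(1 + L + L^2/2 + L^3/6 + L^4/24 + L^5/120 + L^6/720) := hpoly
        _ ≤ (1.0983^2/4) * Real.exp L := by nlinarith [hexp]
        _ ≤ (Real.log 3)^2/4 * Real.exp L := by
            have h9 : (1.0983:ℝ)^2 ≤ (Real.log 3)^2 := by nlinarith [log3_ge]
            nlinarith [Real.exp_pos L, h9]
    have hxe : x * Real.exp L = 1 := by rw [hxL, ← Real.exp_add]; simp
    calc x * (L * (L - Real.log 3)) ≤ x * ((Real.log 3)^2/4 * Real.exp L) :=
          mul_le_mul_of_nonneg_left hstep (le_of_lt h)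
      _ = (Real.log 3)^2/4 * (x * Real.exp L) := by ring
      _ = (Real.log 3)^2/4 := by rw [hxe, mul_one]

lemma term_bound {m x : ℝ} (hm : 1 ≤ m) (h0 : 0 ≤ x) (h1 : x ≤ 1) :
    x * Real.log x * (Real.log x + Real.log m)
      ≤ (4 / (Real.exp 1)^2 + Real.log m / Real.exp 1) / m := by
  have hm0 : (0:ℝ) < m := lt_of_lt_of_le one_pos hm
  have hlogm : 0 ≤ Real.log m := Real.log_nonneg hm
  have hRHS : 0 ≤ (4 / (Real.exp 1)^2 + Real.log m / Real.exp 1) / m := by positivity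
  rcases eq_or_lt_of_le h0 with h | h
  · rw [← h]; simpa using hRHS
  rcases le_or_gt 1 (x*m) with hc | hc
  · -- log x ≤ 0, log x + log m = log (x m) ≥ 0
    have hlx : Real.log x ≤ 0 := Real.log_nonpos (le_of_lt h) h1
    have hlxm : 0 ≤ Real.log x + Real.log m := by
      rw [← Real.log_mul (ne_of_gt h) (ne_of_gt hm0)]
      exact Real.log_nonneg hc
    have : x * Real.log x * (Real.log x + Real.log m) ≤ 0 := by
      apply mul_nonpos_of_nonpos_of_nonneg _ hlxm
      exact mul_nonpos_of_nonneg_of_nonpos h0 hlx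
    linarith
  · -- x m < 1
    set y := x * m with hy
    have hy0 : 0 < y := mul_pos h hm0
    have hy1 : y ≤ 1 := le_of_lt hc
    have l1 : y * (Real.log y)^2 ≤ 4 / (Real.exp 1)^2 := xlogsq_le (le_of_lt hy0) hy1
    have l2 : y * (-Real.log y) ≤ 1 / Real.exp 1 := neg_xlog_le hy0
    have hlogy : Real.log y = Real.log x + Real.log m := Real.log_mul (ne_of_gt h) (ne_of_gt hm0)
    have key : m * (x * Real.log x * (Real.log x + Real.log m))
        = y * (Real.log y)^2 + Real.log m * (y * (-Real.log y)) := by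
      rw [hlogy, hy]; ring
    have hfin : m * (x * Real.log x * (Real.log x + Real.log m))
        ≤ 4 / (Real.exp 1)^2 + Real.log m / Real.exp 1 := by
      rw [key]
      have l3 : Real.log m * (y * (-Real.log y)) ≤ Real.log m * (1/Real.exp 1) :=
        mul_le_mul_of_nonneg_left l2 hlogm
      have : Real.log m * (1/Real.exp 1) = Real.log m / Real.exp 1 := by ring
      linarith
    rw [le_div_iff₀ hm0]
    linarith [hfin]

set_option maxHeartbeats 800000 in
lemma var_le {d : ℕ} (q : Fin d → ℝ) (h0 : ∀ j, 0 ≤ q j) (h1 : ∑ j, q j = 1) :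
    ∑ j, q j * ((-Real.logb 2 (q j)) - (-∑ k, q k * Real.logb 2 (q k)))^2
      ≤ max ((Real.logb 2 3)^2) ((Real.logb 2 (d:ℝ))^2) := by
  have hq1 : ∀ j, q j ≤ 1 := fun j =>
    h1 ▸ Finset.single_le_sum (fun k _ => h0 k) (Finset.mem_univ j)
  have hl2 : (0:ℝ) < Real.log 2 := Real.log_pos (by norm_num)
  have hE : (0:ℝ) < Real.exp 1 := Real.exp_pos 1
  have hE9 : (2.7182818283:ℝ) < Real.exp 1 := Real.exp_one_gt_d9
  have hl29 : (0.6931471803:ℝ) < Real.log 2 := Real.log_two_gt_d9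
  set X : Fin d → ℝ := fun j => -Real.logb 2 (q j) with hX
  have hHX : (-∑ k, q k * Real.logb 2 (q k)) = ∑ k, q k * X k := by
    rw [hX, ← Finset.sum_neg_distrib]
    exact Finset.sum_congr rfl (fun k _ => by ring)
  set Hh : ℝ := ∑ k, q k * X k with hH
  rw [hHX]
  have step1 : ∀ c : ℝ, ∑ j, q j * (X j - Hh)^2 ≤ ∑ j, q j * (X j - c)^2 := by
    intro c
    have expand : ∀ c' : ℝ, ∑ j, q j * (X j - c')^2
        = (∑ j, q j * (X j)^2) - 2*c'*(∑ j, q j * X j) + c'^2 := by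
      intro c'
      rw [Finset.sum_congr rfl
        (fun j _ => show q j * (X j - c')^2
          = q j * (X j)^2 - 2*c'*(q j * X j) + c'^2 * q j from by ring)]
      rw [Finset.sum_add_distrib, Finset.sum_sub_distrib, ← Finset.mul_sum, ← Finset.mul_sum, h1]
      ring
    rw [expand Hh, expand c, ← hH]
    nlinarith [sq_nonneg (Hh - c)]
  have hconv : ∀ (m : ℝ), 0 < m → ∑ j, q j * (X j - Real.log m/(2*Real.log 2))^2
      = ((Real.log m)^2/4 + ∑ j, q j * Real.log (q j) * (Real.log (q j) + Real.log m))
        /(Real.log 2)^2 := by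
    intro m hm
    have hper : ∀ j, q j * (X j - Real.log m/(2*Real.log 2))^2
        = ((Real.log m)^2/4 * q j + q j * Real.log (q j) * (Real.log (q j) + Real.log m))
          /(Real.log 2)^2 := by
      intro j
      rw [hX]
      simp only [Real.logb]
      field_simp
      ring
    rw [Finset.sum_congr rfl (fun j _ => hper j)]
    rw [← Finset.sum_div, Finset.sum_add_distrib, ← Finset.mul_sum, h1, mul_one]
  have hlogb3 : (Real.logb 2 3)^2 = (Real.log 3)^2/(Real.log 2)^2 := by
    simp [Real.logb, div_pow]
  have hXeq : ∀ j, X j = -Real.logb 2 (q j) := fun j => by rw [hX]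
  show ∑ j, q j * (X j - Hh)^2 ≤ max ((Real.logb 2 3)^2) ((Real.logb 2 (d:ℝ))^2)
  clear_value X Hh
  clear hX hH hHX
  rcases le_or_gt d 2 with hd2 | hd2
  · -- d ≤ 2
    refine le_trans (step1 0) (le_trans ?_ (le_max_left _ _))
    have hterm : ∀ j, q j * (X j - 0)^2 ≤ (4/(Real.exp 1)^2) / (Real.log 2)^2 := by
      intro j
      have he : q j * (X j - 0)^2 = (q j * (Real.log (q j))^2)/(Real.log 2)^2 := by
        rw [hXeq j]; simp only [Real.logb]; field_simp; ring
      rw [he]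
      exact (div_le_div_iff_of_pos_right (by positivity)).mpr (xlogsq_le (h0 j) (hq1 j))
    calc ∑ j, q j * (X j - 0)^2 ≤ ∑ _j : Fin d, (4/(Real.exp 1)^2)/(Real.log 2)^2 :=
          Finset.sum_le_sum (fun j _ => hterm j)
      _ = d * ((4/(Real.exp 1)^2)/(Real.log 2)^2) := by
          rw [Finset.sum_const, Finset.card_univ, Fintype.card_fin, nsmul_eq_mul]
      _ ≤ (Real.logb 2 3)^2 := by
          rw [hlogb3]
          have hd2' : (d:ℝ) ≤ 2 := by exact_mod_cast hd2
          have h8 : (d:ℝ) * (4/(Real.exp 1)^2/(Real.log 2)^2)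
              = ((d:ℝ) * (4/(Real.exp 1)^2))/(Real.log 2)^2 := by ring
          have e2 : (7.389:ℝ) ≤ (Real.exp 1)^2 := by nlinarith [hE9]
          have l3 : (1.206:ℝ) ≤ (Real.log 3)^2 := by nlinarith [log3_ge]
          have hnum : (d:ℝ) * (4/(Real.exp 1)^2) ≤ (Real.log 3)^2 := by
            rw [← mul_div_assoc, div_le_iff₀ (show (0:ℝ) < (Real.exp 1)^2 by positivity)]
            nlinarith [e2, l3, hd2', (Nat.cast_nonneg d : (0:ℝ) ≤ d), mul_nonneg (sub_nonneg.mpr e2) (sub_nonneg.mpr l3)]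
          rw [h8]
          exact (div_le_div_iff_of_pos_right (by positivity)).mpr hnum
  · by_cases hd3 : d = 3
    · subst hd3
      refine le_trans (step1 (Real.log 3/(2*Real.log 2))) (le_trans ?_ (le_max_left _ _))
      rw [hconv 3 (by norm_num)]
      have hsum : ∑ j : Fin 3, q j * Real.log (q j) * (Real.log (q j) + Real.log 3)
          ≤ 3*((Real.log 3)^2/4) := by
        calc ∑ j : Fin 3, q j * Real.log (q j) * (Real.log (q j) + Real.log 3)
            ≤ ∑ _j : Fin 3, (Real.log 3)^2/4 :=
              Finset.sum_le_sum (fun j _ => term_bound3 (h0 j) (hq1 j))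
          _ = 3*((Real.log 3)^2/4) := by
              rw [Finset.sum_const, Finset.card_univ, Fintype.card_fin, nsmul_eq_mul]; norm_num
      rw [hlogb3]
      have hnum : (Real.log 3)^2/4 + ∑ j : Fin 3, q j * Real.log (q j) * (Real.log (q j) + Real.log 3)
          ≤ (Real.log 3)^2 := by linarith
      exact (div_le_div_iff_of_pos_right (by positivity)).mpr hnum
    · have hd4 : 4 ≤ d := by omega
      have hd4' : (4:ℝ) ≤ (d:ℝ) := by exact_mod_cast hd4
      have hd0 : (0:ℝ) < d := by linarith
      have hd1 : (1:ℝ) ≤ (d:ℝ) := by linarith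
      refine le_trans (step1 (Real.log d/(2*Real.log 2))) (le_trans ?_ (le_max_right _ _))
      rw [hconv d hd0]
      have hsum : ∑ j, q j * Real.log (q j) * (Real.log (q j) + Real.log d)
          ≤ 4/(Real.exp 1)^2 + Real.log d/Real.exp 1 := by
        calc ∑ j, q j * Real.log (q j) * (Real.log (q j) + Real.log d)
            ≤ ∑ _j : Fin d, (4/(Real.exp 1)^2 + Real.log d/Real.exp 1)/(d:ℝ) :=
              Finset.sum_le_sum (fun j _ => term_bound hd1 (h0 j) (hq1 j))
          _ = (d:ℝ) * ((4/(Real.exp 1)^2 + Real.log d/Real.exp 1)/(d:ℝ)) := by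
              rw [Finset.sum_const, Finset.card_univ, Fintype.card_fin, nsmul_eq_mul]
          _ = 4/(Real.exp 1)^2 + Real.log d/Real.exp 1 := by field_simp
      have hlogd : (1.3862943606:ℝ) ≤ Real.log d := by
        have h4 : Real.log 4 ≤ Real.log d := Real.log_le_log (by norm_num) hd4'
        have h4' : Real.log 4 = 2 * Real.log 2 := by
          rw [show (4:ℝ) = 2^2 by norm_num, Real.log_pow]; push_cast; ring
        linarith [hl29]
      have hE' : (2.7182:ℝ) ≤ Real.exp 1 := by linarith
      have e2 : (7.388:ℝ) ≤ (Real.exp 1)^2 := by nlinarith [hE']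
      have i1 : 4/(Real.exp 1)^2 ≤ 0.55 := by
        rw [div_le_iff₀ (show (0:ℝ) < (Real.exp 1)^2 by positivity)]
        nlinarith [e2]
      have hld0 : (0:ℝ) ≤ Real.log d := by linarith
      have i2 : Real.log d/Real.exp 1 ≤ 0.3679 * Real.log d := by
        rw [div_le_iff₀ hE]
        have hp : 0 ≤ (Real.exp 1 - 2.7182) * Real.log d :=
          mul_nonneg (by linarith) hld0
        nlinarith [hp]
      have hlogd' : (1.38:ℝ) ≤ Real.log d := by linarith
      have hnum : (Real.log d)^2/4 + (4/(Real.exp 1)^2 + Real.log d/Real.exp 1)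
          ≤ (Real.log d)^2 := by
        nlinarith [hlogd', i1, i2, sq_nonneg (Real.log d - 1.38)]
      rw [show (Real.logb 2 (d:ℝ))^2 = (Real.log (d:ℝ))^2/(Real.log 2)^2 from by
        simp [Real.logb, div_pow]]
      exact (div_le_div_iff_of_pos_right (by positivity)).mpr (by linarith [hsum, hnum])

lemma trace_tprod_mul {d n : ℕ} (A B : Fin n → Matrix (Fin d) (Fin d) ℂ) :
    (tprod A * tprod B).trace = ∏ i, (A i * B i).trace := by
  have h1 : ∀ i, (A i * B i).trace = ∑ a, ∑ b, A i a b * B i b a := by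
    intro i; simp [Matrix.trace, Matrix.diag, Matrix.mul_apply]
  simp only [h1]
  rw [Fintype.prod_sum (fun (i : Fin n) (a : Fin d) => ∑ b, A i a b * B i b a)]
  simp only [Matrix.trace, Matrix.diag, Matrix.mul_apply, tprod]
  apply Finset.sum_congr rfl
  intro j _
  rw [Fintype.prod_sum (fun (i : Fin n) (b : Fin d) => A i (j i) b * B i b (j i))]
  apply Finset.sum_congr rfl
  intro k _
  rw [Finset.prod_mul_distrib]

lemma trace_of_pure {d : ℕ} {P : Matrix (Fin d) (Fin d) ℂ} (h : IsPure P) : P.trace = 1 := by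
  obtain ⟨hH, hIdem, hRank⟩ := h
  have hspec := hH.spectral_theorem
  set U : Matrix (Fin d) (Fin d) ℂ := (hH.eigenvectorUnitary : Matrix (Fin d) (Fin d) ℂ)
    with hUdef
  set ev : Fin d → ℝ := hH.eigenvalues with hev
  set D : Matrix (Fin d) (Fin d) ℂ := Matrix.diagonal (RCLike.ofReal ∘ ev) with hD
  have hUU : star U * U = 1 := (Unitary.mem_iff.mp hH.eigenvectorUnitary.2).1
  have hUU' : U * star U = 1 := (Unitary.mem_iff.mp hH.eigenvectorUnitary.2).2
  rw [Unitary.conjStarAlgAut_apply, ← hUdef] at hspec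
  have hDeq : star U * P * U = D := by
    rw [hspec]
    simp only [← mul_assoc]
    rw [hUU, one_mul, mul_assoc, hUU, mul_one]
  have hDD : D * D = D := by
    rw [← hDeq]
    calc (star U * P * U) * (star U * P * U)
        = star U * (P * (U * (star U * (P * U)))) := by simp only [mul_assoc]
      _ = star U * (P * (P * U)) := by rw [← mul_assoc U (star U) (P * U), hUU', one_mul]
      _ = star U * P * U := by rw [← mul_assoc P P U, hIdem]; simp only [mul_assoc]
  have hev01 : ∀ i, ev i = 0 ∨ ev i = 1 := by
    intro i
    rw [hD, Matrix.diagonal_mul_diagonal] at hDD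
    have h3 := congrFun (congrFun hDD i) i
    simp [Matrix.diagonal_apply_eq, Matrix.diagonal] at h3
    have h4 : ev i * ev i = ev i := by exact_mod_cast h3
    rcases mul_eq_zero.mp (show ev i * (ev i - 1) = 0 by linear_combination h4) with h5 | h5
    · exact Or.inl h5
    · exact Or.inr (by linarith [sub_eq_zero.mp h5])
  have htr : P.trace = ∑ i, ((ev i : ℝ) : ℂ) := by
    rw [hspec, Matrix.trace_mul_comm, ← mul_assoc, hUU, one_mul, hD, Matrix.trace_diagonal]
    simp [Function.comp]
  have hcard : Fintype.card {i // ev i ≠ 0} = 1 := by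
    rw [← hH.rank_eq_card_non_zero_eigs]; exact hRank
  have hsum : ∑ i, ev i = 1 := by
    rw [← Finset.sum_filter_ne_zero]
    have : ∀ i ∈ Finset.univ.filter (fun i => ev i ≠ 0), ev i = 1 := by
      intro i hi
      rcases hev01 i with h | h
      · exact absurd h (by simpa using hi)
      · exact h
    rw [Finset.sum_congr rfl this, Finset.sum_const, nsmul_eq_mul, mul_one]
    have h6 : (Finset.univ.filter (fun i => ev i ≠ 0)).card = 1 := by
      rw [← Fintype.card_subtype]; exact hcard
    rw [h6]; norm_num
  rw [htr]
  norm_cast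

/-- The entropy-typical projector of `ρ₁ ⊗ ⋯ ⊗ ρₙ` with constant `δ` catches
probability at least `1 − K/δ²`, with `K = max{(log₂3)², (log₂d)²}`.  Here
`ρᵢ = ∑ⱼ q_{j|i} π_{ij}` are diagonalizations into rank-one orthogonal
eigenprojections. -/
theorem entropy_typical_projector {d n : ℕ}
    (ρ : Fin n → Matrix (Fin d) (Fin d) ℂ) (hρ : ∀ i, IsDensity (ρ i))
    (q : Fin n → Fin d → ℝ) (π : Fin n → Fin d → Matrix (Fin d) (Fin d) ℂ)
    (hq0 : ∀ i j, 0 ≤ q i j) (hπ : ∀ i j, IsPure (π i j))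
    (horth : ∀ i j k, j ≠ k → π i j * π i k = 0) (hπsum : ∀ i, ∑ j, π i j = 1)
    (hdiag : ∀ i, ρ i = ∑ j, (q i j : ℂ) • π i j)
    (δ : ℝ) (hδ : 0 < δ) :
    let H : Fin n → ℝ := fun i => -∑ j, q i j * Real.logb 2 (q i j)
    let T : Finset (Fin n → Fin d) := Finset.univ.filter fun jn =>
      |(∑ i, -Real.logb 2 (q i (jn i))) - ∑ i, H i| ≤ δ * Real.sqrt n
    let Pi : Matrix (Fin n → Fin d) (Fin n → Fin d) ℂ :=
      ∑ jn ∈ T, tprod fun i => π i (jn i)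
    let K : ℝ := max ((Real.logb 2 3) ^ 2) ((Real.logb 2 d) ^ 2)
    1 - K / δ ^ 2 ≤ ((tprod ρ * Pi).trace).re := by
  intro H T Pi K
  have hTdef : T = Finset.univ.filter (fun jn =>
      |(∑ i, -Real.logb 2 (q i (jn i))) - ∑ i, H i| ≤ δ * Real.sqrt n) := rfl
  have hHdef : ∀ i, H i = -∑ j, q i j * Real.logb 2 (q i j) := fun i => rfl
  have hKdef : K = max ((Real.logb 2 3) ^ 2) ((Real.logb 2 d) ^ 2) := rfl
  have hπtr : ∀ i j, (π i j).trace = 1 := fun i j => trace_of_pure (hπ i j)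
  have hmultr : ∀ i j, (ρ i * π i j).trace = (q i j : ℂ) := by
    intro i j
    rw [hdiag i, Finset.sum_mul, Matrix.trace_sum]
    have h9 : ∑ k, (((q i k : ℂ) • π i k) * π i j).trace
        = (((q i j : ℂ) • π i j) * π i j).trace := by
      apply Finset.sum_eq_single_of_mem j (Finset.mem_univ j)
      intro k _ hk
      rw [smul_mul_assoc, horth i k j hk, smul_zero, Matrix.trace_zero]
    rw [h9, smul_mul_assoc, (hπ i j).2.1, Matrix.trace_smul, hπtr i j, smul_eq_mul, mul_one]
  have hq1 : ∀ i, ∑ j, q i j = 1 := by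
    intro i
    have h2 : (ρ i).trace = ((∑ j, q i j : ℝ) : ℂ) := by
      rw [hdiag i, Matrix.trace_sum]
      push_cast
      exact Finset.sum_congr rfl fun j _ => by
        rw [Matrix.trace_smul, hπtr i j, smul_eq_mul, mul_one]
    have h3 := (hρ i).2
    rw [h2] at h3
    exact_mod_cast h3
  have htrace : (tprod ρ * Pi).trace = ((∑ jn ∈ T, ∏ i, q i (jn i) : ℝ) : ℂ) := by
    show (tprod ρ * ∑ jn ∈ T, tprod fun i => π i (jn i)).trace = _
    rw [Finset.mul_sum, Matrix.trace_sum]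
    push_cast
    refine Finset.sum_congr rfl fun jn _ => ?_
    rw [trace_tprod_mul]
    exact Finset.prod_congr rfl fun i _ => hmultr i (jn i)
  rw [htrace, Complex.ofReal_re]
  have hP0 : ∀ jn : Fin n → Fin d, (0:ℝ) ≤ ∏ i, q i (jn i) :=
    fun jn => Finset.prod_nonneg fun i _ => hq0 i (jn i)
  have hPsum : ∑ jn : Fin n → Fin d, ∏ i, q i (jn i) = 1 := by
    rw [← Fintype.prod_sum q]
    exact Finset.prod_eq_one fun i _ => hq1 i
  have hsdiff : ∑ jn ∈ Finset.univ \ T, ∏ i, q i (jn i)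
      = 1 - ∑ jn ∈ T, ∏ i, q i (jn i) := by
    rw [Finset.sum_sdiff_eq_sub (Finset.subset_univ T), hPsum]
  have hKnn : (0:ℝ) ≤ K := by rw [hKdef]; positivity
  suffices hmain : ∑ jn ∈ Finset.univ \ T, ∏ i, q i (jn i) ≤ K / δ ^ 2 by
    linarith [hsdiff, hmain]
  rcases Nat.eq_zero_or_pos n with hn | hn
  · have hTe : Finset.univ \ T = ∅ := by
      subst hn
      rw [Finset.sdiff_eq_empty_iff_subset]
      intro jn _
      rw [hTdef, Finset.mem_filter]
      refine ⟨Finset.mem_univ jn, ?_⟩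
      simp
    rw [hTe, Finset.sum_empty]
    positivity
  · have hn' : (0:ℝ) < n := by exact_mod_cast hn
    have hδn : (0:ℝ) < δ ^ 2 * n := by positivity
    set Y : Fin n → Fin d → ℝ := fun i j => -Real.logb 2 (q i j) - H i with hYdef
    have hYeq : ∀ i j, Y i j = -Real.logb 2 (q i j) - H i := fun i j => rfl
    have hY0 : ∀ i, ∑ j, q i j * Y i j = 0 := by
      intro i
      have h2 : ∀ j, q i j * Y i j
          = q i j * (-Real.logb 2 (q i j)) + -(q i j * H i) :=
        fun j => by rw [hYeq]; ring
      rw [Finset.sum_congr rfl fun j _ => h2 j, Finset.sum_add_distrib,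
        Finset.sum_neg_distrib, ← Finset.sum_mul, hq1 i, one_mul, hHdef i, neg_neg,
        ← Finset.sum_add_distrib]
      exact Finset.sum_eq_zero fun j _ => by ring
    have hV : ∀ i, ∑ j, q i j * (Y i j) ^ 2 ≤ K := by
      intro i
      have h2 := var_le (q i) (hq0 i) (hq1 i)
      rw [hKdef]
      have h3 : ∀ j, Y i j
          = -Real.logb 2 (q i j) - (-∑ k, q i k * Real.logb 2 (q i k)) :=
        fun j => by rw [hYeq, hHdef i]
      rw [Finset.sum_congr rfl fun j _ => by rw [h3 j]]
      exact h2
    have hfact : ∀ i i' : Fin n,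
        ∑ jn : Fin n → Fin d, (∏ k, q k (jn k)) * (Y i (jn i) * Y i' (jn i'))
        = ∏ k, ∑ j, q k j * ((if i = k then Y k j else 1) * (if i' = k then Y k j else 1)) := by
      intro i i'
      rw [Fintype.prod_sum (fun (k : Fin n) (j : Fin d) =>
        q k j * ((if i = k then Y k j else 1) * (if i' = k then Y k j else 1)))]
      refine Finset.sum_congr rfl fun jn _ => ?_
      rw [Finset.prod_mul_distrib, Finset.prod_mul_distrib,
        Finset.prod_ite_eq, Finset.prod_ite_eq]
      simp
    have hdiagE : ∀ i, ∑ jn : Fin n → Fin d,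
        (∏ k, q k (jn k)) * (Y i (jn i) * Y i (jn i)) = ∑ j, q i j * (Y i j) ^ 2 := by
      intro i
      rw [hfact i i, Finset.prod_eq_single i]
      · refine Finset.sum_congr rfl fun j _ => ?_
        rw [if_pos rfl]; ring
      · intro k _ hk
        have h7 : ∀ j, q k j * ((if i = k then Y k j else 1) * (if i = k then Y k j else 1))
            = q k j := fun j => by rw [if_neg (Ne.symm hk)]; ring
        rw [Finset.sum_congr rfl fun j _ => h7 j]
        exact hq1 k
      · intro h; exact absurd (Finset.mem_univ i) h
    have hoffE : ∀ i i', i ≠ i' → ∑ jn : Fin n → Fin d,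
        (∏ k, q k (jn k)) * (Y i (jn i) * Y i' (jn i')) = 0 := by
      intro i i' hne
      rw [hfact i i']
      apply Finset.prod_eq_zero (Finset.mem_univ i)
      have h7 : ∀ j, q i j * ((if i = i then Y i j else 1) * (if i' = i then Y i j else 1))
          = q i j * Y i j := fun j => by rw [if_pos rfl, if_neg (Ne.symm hne)]; ring
      rw [Finset.sum_congr rfl fun j _ => h7 j]
      exact hY0 i
    have key : ∑ jn : Fin n → Fin d, (∏ k, q k (jn k)) * ((∑ i, Y i (jn i)) ^ 2)
        = ∑ i, ∑ j, q i j * (Y i j) ^ 2 := by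
      have e1 : ∀ jn : Fin n → Fin d, (∏ k, q k (jn k)) * ((∑ i, Y i (jn i)) ^ 2)
          = ∑ i, ∑ i', (∏ k, q k (jn k)) * (Y i (jn i) * Y i' (jn i')) := by
        intro jn
        rw [sq, Finset.sum_mul_sum, Finset.mul_sum]
        refine Finset.sum_congr rfl fun i _ => ?_
        rw [Finset.mul_sum]
      rw [Finset.sum_congr rfl fun jn _ => e1 jn, Finset.sum_comm]
      refine Finset.sum_congr rfl fun i _ => ?_
      rw [Finset.sum_comm, Finset.sum_eq_single i]
      · exact hdiagE i
      · intro i' _ hne; exact hoffE i i' (Ne.symm hne)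
      · intro h; exact absurd (Finset.mem_univ i) h
    have hcheb : ∀ jn ∈ Finset.univ \ T, ∏ i, q i (jn i)
        ≤ (∏ i, q i (jn i)) * ((∑ i, Y i (jn i)) ^ 2) / (δ ^ 2 * n) := by
      intro jn hjn
      rw [Finset.mem_sdiff, hTdef, Finset.mem_filter] at hjn
      have h2 : ¬ (|(∑ i, -Real.logb 2 (q i (jn i))) - ∑ i, H i| ≤ δ * Real.sqrt n) :=
        fun hcon => hjn.2 ⟨Finset.mem_univ jn, hcon⟩
      push_neg at h2
      have h4 : (∑ i, -Real.logb 2 (q i (jn i))) - ∑ i, H i = ∑ i, Y i (jn i) := by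
        rw [← Finset.sum_sub_distrib]
      rw [h4] at h2
      have h6 : (δ * Real.sqrt n) ^ 2 = δ ^ 2 * n := by
        rw [mul_pow, Real.sq_sqrt (Nat.cast_nonneg n)]
      have h8 : 0 ≤ δ * Real.sqrt n := by positivity
      have h7 := mul_self_lt_mul_self h8 h2
      rw [← pow_two, ← pow_two, sq_abs] at h7
      have h5 : δ ^ 2 * n < (∑ i, Y i (jn i)) ^ 2 := by linarith
      rw [le_div_iff₀ hδn]
      exact mul_le_mul_of_nonneg_left h5.le (hP0 jn)
    calc ∑ jn ∈ Finset.univ \ T, ∏ i, q i (jn i)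
        ≤ ∑ jn ∈ Finset.univ \ T,
            (∏ i, q i (jn i)) * ((∑ i, Y i (jn i)) ^ 2) / (δ ^ 2 * n) :=
          Finset.sum_le_sum hcheb
      _ ≤ ∑ jn : Fin n → Fin d,
            (∏ i, q i (jn i)) * ((∑ i, Y i (jn i)) ^ 2) / (δ ^ 2 * n) :=
          Finset.sum_le_sum_of_subset_of_nonneg Finset.sdiff_subset
            (fun jn _ _ => div_nonneg (mul_nonneg (hP0 jn) (sq_nonneg _)) hδn.le)
      _ = (∑ jn : Fin n → Fin d, (∏ i, q i (jn i)) * ((∑ i, Y i (jn i)) ^ 2)) / (δ ^ 2 * n) := by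
          rw [Finset.sum_div]
      _ = (∑ i, ∑ j, q i j * (Y i j) ^ 2) / (δ ^ 2 * n) := by rw [key]
      _ ≤ ((n:ℝ) * K) / (δ ^ 2 * n) := by
          have h10 : ∑ i, ∑ j, q i j * (Y i j) ^ 2 ≤ (n:ℝ) * K := by
            have h11 : ∑ i, ∑ j, q i j * (Y i j) ^ 2 ≤ ∑ _i : Fin n, K :=
              Finset.sum_le_sum fun i _ => hV i
            rwa [Finset.sum_const, Finset.card_univ, Fintype.card_fin, nsmul_eq_mul] at h11
          exact (div_le_div_iff_of_pos_right hδn).mpr h10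
      _ = K / δ ^ 2 := by
          rw [mul_comm (δ ^ 2) (n:ℝ), mul_div_mul_left _ _ (ne_of_gt hn')]

end QIT
end

section
/- (Size of the constant-typical projector) Let ρ be a density operator on ℂ^d with diagonalization ρ = ∑_j q_j π_j into rank-one orthogonal eigenprojections, and for δ > 0 let Π = ∑ π_{j₁}⊗⋯⊗π_{jₙ}, the sum over all jⁿ with |N(j|jⁿ) − nq_j| ≤ δ√n for all j. Then for every 0 < δ ≤ √n/(2d): Tr Π ≤ (n+1)^d · 2^{nH(ρ) + n·d·η(δ/√n)}, where η(x) = −x log₂ x. -/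
open scoped ComplexOrder Matrix

namespace QIT

/- ### Auxiliary analytic lemmas -/

lemma aux_antitoneA : AntitoneOn (fun x : ℝ => x * Real.log x - x) (Set.Icc 0 1) := by
  apply antitoneOn_of_deriv_nonpos (convex_Icc 0 1)
  · exact (Real.continuous_mul_log.sub continuous_id).continuousOn
  · intro x hx
    rw [interior_Icc] at hx
    exact ((Real.hasDerivAt_mul_log hx.1.ne').sub
      (hasDerivAt_id x)).differentiableAt.differentiableWithinAt
  · intro x hx
    rw [interior_Icc] at hx
    have hd := ((Real.hasDerivAt_mul_log hx.1.ne').sub (hasDerivAt_id x)).deriv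
    rw [show ((fun x : ℝ => x * Real.log x) - id) = fun x => x * Real.log x - x from rfl] at hd
    rw [hd]
    simp only [add_sub_cancel_right]
    exact Real.log_nonpos hx.1.le hx.2.le

lemma aux_antitoneC : AntitoneOn (fun x : ℝ => x * Real.log x) (Set.Icc 0 (Real.exp (-1))) := by
  apply antitoneOn_of_deriv_nonpos (convex_Icc _ _)
  · exact Real.continuous_mul_log.continuousOn
  · intro x hx
    rw [interior_Icc] at hx
    exact (Real.hasDerivAt_mul_log hx.1.ne').differentiableAt.differentiableWithinAt
  · intro x hx
    rw [interior_Icc] at hx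
    rw [(Real.hasDerivAt_mul_log hx.1.ne').deriv]
    have : Real.log x ≤ -1 := by
      calc Real.log x ≤ Real.log (Real.exp (-1)) := Real.log_le_log hx.1 hx.2.le
        _ = -1 := Real.log_exp _
    linarith

lemma aux_subadd {a c : ℝ} (ha : 0 ≤ a) (hc : 0 ≤ c) :
    -((a + c) * Real.log (a + c)) ≤ -(a * Real.log a) + -(c * Real.log c) := by
  have h1 : a * Real.log a ≤ a * Real.log (a + c) := by
    rcases eq_or_lt_of_le ha with h | h
    · simp [← h]
    · exact mul_le_mul_of_nonneg_left (Real.log_le_log h (by linarith)) ha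
  have h2 : c * Real.log c ≤ c * Real.log (a + c) := by
    rcases eq_or_lt_of_le hc with h | h
    · simp [← h]
    · exact mul_le_mul_of_nonneg_left (Real.log_le_log h (by linarith)) hc
  have : (a + c) * Real.log (a + c) = a * Real.log (a + c) + c * Real.log (a + c) := by ring
  linarith

lemma aux_eta_cont {t q e : ℝ} (ht0 : 0 ≤ t) (ht1 : t ≤ 1) (hq0 : 0 ≤ q) (hq1 : q ≤ 1)
    (he : |t - q| ≤ e) (he0 : 0 < e) (he1 : e ≤ Real.exp (-1)) :
    -(t * Real.log t) ≤ -(q * Real.log q) + -(e * Real.log e) := by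
  have hloge : Real.log e ≤ -1 := by
    calc Real.log e ≤ Real.log (Real.exp (-1)) := Real.log_le_log he0 he1
      _ = -1 := Real.log_exp _
  have hee : e ≤ -(e * Real.log e) := by nlinarith
  rcases le_or_gt t q with h | h
  · have hA := aux_antitoneA (Set.mem_Icc.mpr ⟨ht0, ht1⟩) (Set.mem_Icc.mpr ⟨hq0, hq1⟩) h
    simp only at hA
    have : q - t ≤ e := by
      rw [abs_sub_comm] at he
      exact (le_abs_self _).trans he
    linarith
  · set c := t - q with hc
    have hc0 : 0 ≤ c := by simp [hc]; linarith
    have hce : c ≤ e := (le_abs_self _).trans he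
    have hB := aux_subadd hq0 hc0
    have hq_c : q + c = t := by ring
    rw [hq_c] at hB
    have hC : -(c * Real.log c) ≤ -(e * Real.log e) := by
      have := aux_antitoneC (Set.mem_Icc.mpr ⟨hc0, hce.trans he1⟩)
        (Set.mem_Icc.mpr ⟨he0.le, he1⟩) hce
      simp only at this
      linarith
    linarith

lemma aux_eta_logb {t q e : ℝ} (ht0 : 0 ≤ t) (ht1 : t ≤ 1) (hq0 : 0 ≤ q) (hq1 : q ≤ 1)
    (he : |t - q| ≤ e) (he0 : 0 < e) (he1 : e ≤ Real.exp (-1)) :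
    -(t * Real.logb 2 t) ≤ -(q * Real.logb 2 q) + -(e * Real.logb 2 e) := by
  have key := aux_eta_cont ht0 ht1 hq0 hq1 he he0 he1
  have h2 : (0:ℝ) < Real.log 2 := Real.log_pos one_lt_two
  simp only [Real.logb]
  rw [show -(t * (Real.log t / Real.log 2)) = -(t * Real.log t) / Real.log 2 by ring,
    show -(q * (Real.log q / Real.log 2)) + -(e * (Real.log e / Real.log 2))
      = (-(q * Real.log q) + -(e * Real.log e)) / Real.log 2 by ring]
  exact div_le_div_of_nonneg_right key h2.le

lemma aux_quarter : (1:ℝ)/4 ≤ Real.exp (-1) := by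
  have h4 : Real.exp 1 ≤ 4 := by nlinarith [Real.exp_one_lt_d9]
  rw [Real.exp_neg, ← one_div]
  exact one_div_le_one_div_of_le (Real.exp_pos 1) h4

/- ### Auxiliary spectral lemmas -/

lemma aux_trace_eigs {d : ℕ} {A : Matrix (Fin d) (Fin d) ℂ} (hA : A.IsHermitian) :
    A.trace = ∑ i, (hA.eigenvalues i : ℂ) := by
  conv_lhs => rw [hA.spectral_theorem]
  rw [Unitary.conjStarAlgAut_apply]
  rw [Matrix.trace_mul_cycle]
  rw [show (star (hA.eigenvectorUnitary : Matrix (Fin d) (Fin d) ℂ)) *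
      (hA.eigenvectorUnitary : Matrix (Fin d) (Fin d) ℂ) = 1 from
    Unitary.coe_star_mul_self _]
  rw [one_mul, Matrix.trace_diagonal]
  rfl

lemma aux_eig_idem {d : ℕ} {A : Matrix (Fin d) (Fin d) ℂ} (hA : A.IsHermitian)
    (hidem : A * A = A) (i : Fin d) :
    hA.eigenvalues i = 0 ∨ hA.eigenvalues i = 1 := by
  set l := hA.eigenvalues i with hl
  set v : Fin d → ℂ := ⇑(hA.eigenvectorBasis i) with hv
  have hmv : A *ᵥ v = l • v := hA.mulVec_eigenvectorBasis i
  have h2 : A *ᵥ (A *ᵥ v) = (l * l) • v := by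
    rw [hmv, Matrix.mulVec_smul, hmv, smul_smul]
  have h3 : A *ᵥ (A *ᵥ v) = l • v := by
    rw [Matrix.mulVec_mulVec, hidem, hmv]
  have hvne : v ≠ 0 := by
    have hne := hA.eigenvectorBasis.orthonormal.ne_zero i
    intro hcontra
    apply hne
    apply (EuclideanSpace.equiv (Fin d) ℂ).injective
    ext j
    exact congrFun hcontra j
  obtain ⟨j, hj⟩ := Function.ne_iff.mp hvne
  have h4 : (l * l) • v j = l • v j := by
    rw [h2] at h3
    exact congrFun h3 j
  have h5 : ((l * l - l) : ℝ) • v j = 0 := by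
    rw [sub_smul, h4, sub_self]
  rcases smul_eq_zero.mp h5 with h | h
  · rcases mul_eq_zero.mp (show l * (l - 1) = 0 by linear_combination h) with h0 | h1
    · exact Or.inl h0
    · right; linarith
  · exact absurd h hj

lemma aux_trace_pure {d : ℕ} {A : Matrix (Fin d) (Fin d) ℂ}
    (hA : A.IsHermitian) (hidem : A * A = A) (hrank : A.rank = 1) :
    A.trace = 1 := by
  have hcard : Fintype.card {i // hA.eigenvalues i ≠ 0} = 1 := by
    rw [← hA.rank_eq_card_non_zero_eigs]; exact hrank
  have hsum : ∑ i, hA.eigenvalues i = 1 := by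
    have h01 : ∀ i, hA.eigenvalues i = if hA.eigenvalues i ≠ 0 then 1 else 0 := by
      intro i
      rcases aux_eig_idem hA hidem i with h | h <;> simp [h]
    rw [Finset.sum_congr rfl (fun i _ => h01 i), Finset.sum_boole, ← Fintype.card_subtype, hcard]
    norm_num
  rw [aux_trace_eigs hA]
  rw [← Complex.ofReal_sum, hsum, Complex.ofReal_one]

/- ### Auxiliary combinatorial lemmas -/

lemma aux_tprod_trace {d n : ℕ} (ρ : Fin n → Matrix (Fin d) (Fin d) ℂ) :
    (tprod ρ).trace = ∏ i, (ρ i).trace := by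
  simp only [Matrix.trace, Matrix.diag, tprod]
  rw [Finset.prod_univ_sum, Fintype.piFinset_univ]

lemma aux_occ_sum {n d : ℕ} (jn : Fin n → Fin d) : ∑ j, occ j jn = n := by
  simp only [occ]
  rw [← Finset.card_eq_sum_card_fiberwise (fun x _ => Finset.mem_univ (jn x))]
  simp

lemma aux_prod_occ {n d : ℕ} (jn : Fin n → Fin d) (t : Fin d → ℝ) :
    ∏ i, t (jn i) = ∏ j, t j ^ occ j jn := by
  rw [Finset.prod_comp]
  apply Finset.prod_subset (Finset.subset_univ _)
  intro b _ hb
  have h0 : occ b jn = 0 := by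
    simp only [occ, Finset.card_eq_zero, Finset.filter_eq_empty_iff]
    intro i _ hcontra
    exact hb (hcontra ▸ Finset.mem_image_of_mem jn (Finset.mem_univ i))
  rw [show (Finset.filter (fun a => jn a = b) Finset.univ).card = occ b jn from rfl, h0, pow_zero]

lemma aux_count_type {n d : ℕ} (hn : 0 < n) (N : Fin d → ℕ) (hNsum : ∑ j, N j = n) :
    ((Finset.univ.filter fun jn : Fin n → Fin d => ∀ j, occ j jn = N j).card : ℝ)
      * ∏ j, ((N j : ℝ) / n) ^ (N j) ≤ 1 := by
  set t : Fin d → ℝ := fun j => (N j : ℝ) / n with hts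
  have ht0 : ∀ j, 0 ≤ t j := fun j => by positivity
  have htsum : ∑ j, t j = 1 := by
    simp only [hts, ← Finset.sum_div]
    rw [show ∑ j, ((N j : ℝ)) = ((∑ j, N j : ℕ) : ℝ) by push_cast; ring, hNsum]
    field_simp
  set S := Finset.univ.filter fun jn : Fin n → Fin d => ∀ j, occ j jn = N j with hS
  calc (S.card : ℝ) * ∏ j, t j ^ (N j)
      = ∑ _jn ∈ S, ∏ j, t j ^ (N j) := by rw [Finset.sum_const, nsmul_eq_mul]
    _ = ∑ jn ∈ S, ∏ i, t (jn i) := by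
        apply Finset.sum_congr rfl
        intro jn hjn
        rw [aux_prod_occ]
        apply Finset.prod_congr rfl
        intro j _
        rw [(Finset.mem_filter.mp hjn).2 j]
    _ ≤ ∑ jn : Fin n → Fin d, ∏ i, t (jn i) := by
        apply Finset.sum_le_sum_of_subset_of_nonneg (Finset.subset_univ _)
        intro jn _ _
        exact Finset.prod_nonneg fun i _ => ht0 _
    _ = ∏ _i : Fin n, ∑ j, t j := by
        rw [Finset.prod_univ_sum, Fintype.piFinset_univ]
    _ = 1 := by rw [htsum]; simp

/-- Size of the constant-typical projector: for `0 < δ ≤ √n/(2d)`,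
`Tr Π ≤ (n+1)^d · 2^{nH(ρ) + n·d·η(δ/√n)}` where `η(x) = −x log₂ x`. -/
theorem constant_typical_projector_size {d n : ℕ}
    (ρ : Matrix (Fin d) (Fin d) ℂ) (hρ : IsDensity ρ)
    (q : Fin d → ℝ) (π : Fin d → Matrix (Fin d) (Fin d) ℂ)
    (hq0 : ∀ j, 0 ≤ q j) (hπ : ∀ j, IsPure (π j))
    (horth : ∀ j k, j ≠ k → π j * π k = 0) (hπsum : ∑ j, π j = 1)
    (hdiag : ρ = ∑ j, (q j : ℂ) • π j)
    (δ : ℝ) (hδ0 : 0 < δ) (hδ1 : δ ≤ Real.sqrt n / (2 * d)) :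
    let T : Finset (Fin n → Fin d) := Finset.univ.filter fun jn =>
      ∀ j, |(occ j jn : ℝ) - n * q j| ≤ δ * Real.sqrt n
    let Pi : Matrix (Fin n → Fin d) (Fin n → Fin d) ℂ :=
      ∑ jn ∈ T, tprod fun i => π (jn i)
    let H : ℝ := -∑ j, q j * Real.logb 2 (q j)
    (Pi.trace).re
      ≤ ((n : ℝ) + 1) ^ d
          * (2 : ℝ) ^ ((n : ℝ) * H
              + (n : ℝ) * d * (-(δ / Real.sqrt n) * Real.logb 2 (δ / Real.sqrt n))) := by
  intro T Pi H
  classical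
  -- positivity of n and d
  have hd0 : 0 < d := by
    rcases Nat.eq_zero_or_pos d with h | h
    · exfalso; subst h; simp at hδ1; linarith
    · exact h
  have hn0 : 0 < n := by
    rcases Nat.eq_zero_or_pos n with h | h
    · exfalso; subst h; simp [Real.sqrt_zero] at hδ1; linarith
    · exact h
  have hsn : 0 < Real.sqrt n := Real.sqrt_pos.mpr (by exact_mod_cast hn0)
  set ε := δ / Real.sqrt n with hεdef
  have hε0 : 0 < ε := div_pos hδ0 hsn
  -- traces of pure states
  have hπtr : ∀ j, (π j).trace = 1 := fun j =>
    aux_trace_pure (hπ j).1 (hπ j).2.1 (hπ j).2.2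
  -- sum of q is 1
  have hqsum : ∑ j, q j = 1 := by
    have h1 : ρ.trace = ∑ j, (q j : ℂ) := by
      rw [hdiag, Matrix.trace_sum]
      apply Finset.sum_congr rfl
      intro j _
      rw [Matrix.trace_smul, hπtr j, smul_eq_mul, mul_one]
    rw [hρ.2] at h1
    exact_mod_cast h1.symm
  have hq1 : ∀ j, q j ≤ 1 := by
    intro j
    calc q j ≤ ∑ k, q k := Finset.single_le_sum (fun k _ => hq0 k) (Finset.mem_univ j)
      _ = 1 := hqsum
  -- trace of Pi is card of T
  have hcount : Pi.trace = (T.card : ℂ) := by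
    show (∑ jn ∈ T, tprod fun i => π (jn i)).trace = _
    rw [Matrix.trace_sum]
    have hone : ∀ jn ∈ T, (tprod fun i => π (jn i)).trace = 1 := by
      intro jn _
      rw [aux_tprod_trace]
      exact Finset.prod_eq_one fun i _ => hπtr (jn i)
    rw [Finset.sum_congr rfl hone]
    simp
  have hLHS : (Pi.trace).re = (T.card : ℝ) := by
    rw [hcount, Complex.natCast_re]
  rw [hLHS]
  -- nonnegativity facts
  have hε1 : ε ≤ 1 / (2 * d) := by
    rw [hεdef, div_le_div_iff₀ hsn (by positivity)]
    calc δ * (2 * d) ≤ (Real.sqrt n / (2 * d)) * (2 * d) := by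
          apply mul_le_mul_of_nonneg_right hδ1 (by positivity)
      _ = Real.sqrt n := by field_simp
      _ = 1 * Real.sqrt n := (one_mul _).symm
  have hε_le_one : ε ≤ 1 := by
    have : (1:ℝ) / (2 * d) ≤ 1 := by
      rw [div_le_one (by positivity)]
      have : (1:ℝ) ≤ d := by exact_mod_cast hd0
      linarith
    linarith
  have hη_nonneg : 0 ≤ -(ε * Real.logb 2 ε) := by
    have : Real.logb 2 ε ≤ 0 := Real.logb_nonpos one_lt_two hε0.le hε_le_one
    nlinarith
  have hH_nonneg : 0 ≤ H := by
    show 0 ≤ -∑ j, q j * Real.logb 2 (q j)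
    rw [neg_nonneg]
    apply Finset.sum_nonpos
    intro j _
    rcases eq_or_lt_of_le (hq0 j) with h | h
    · rw [← h]; simp
    · have : Real.logb 2 (q j) ≤ 0 := Real.logb_nonpos one_lt_two (hq0 j) (hq1 j)
      exact mul_nonpos_of_nonneg_of_nonpos (hq0 j) this
  have hRHS_exp_eq : (n : ℝ) * H + (n : ℝ) * d * (-(δ / Real.sqrt n)
        * Real.logb 2 (δ / Real.sqrt n))
      = (n : ℝ) * H + (n : ℝ) * d * (-(ε * Real.logb 2 ε)) := by
    rw [hεdef]; ring
  rw [hRHS_exp_eq]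
  set B : ℝ := (2:ℝ) ^ ((n : ℝ) * H + (n : ℝ) * d * (-(ε * Real.logb 2 ε))) with hBdef
  have hB1 : 1 ≤ B := by
    rw [hBdef, show (1:ℝ) = (2:ℝ) ^ (0:ℝ) by rw [Real.rpow_zero]]
    apply Real.rpow_le_rpow_of_exponent_le one_le_two
    have h1 : 0 ≤ (n:ℝ) * H := by positivity
    have h2 : 0 ≤ (n : ℝ) * d * (-(ε * Real.logb 2 ε)) := by positivity
    linarith
  have hB0 : 0 ≤ B := by linarith
  -- case d = 1
  rcases eq_or_lt_of_le (show 1 ≤ d from hd0) with hd1 | hd2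
  · have hcard1 : T.card ≤ 1 := by
      calc T.card ≤ Fintype.card (Fin n → Fin d) := Finset.card_le_univ T
        _ = d ^ n := by simp
        _ = 1 := by rw [← hd1]; exact one_pow n
    calc (T.card : ℝ) ≤ 1 := by exact_mod_cast hcard1
      _ ≤ ((n:ℝ) + 1) ^ d * B := by
          have h1 : (1:ℝ) ≤ ((n:ℝ)+1)^d := one_le_pow₀ (by linarith [Nat.cast_nonneg (α := ℝ) n])
          nlinarith
  -- main case: d ≥ 2
  have hε4 : ε ≤ 1/4 := by
    have : (1:ℝ)/(2*d) ≤ 1/4 := by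
      apply one_div_le_one_div_of_le (by norm_num)
      have : (2:ℝ) ≤ d := by exact_mod_cast hd2
      linarith
    linarith
  have hεe : ε ≤ Real.exp (-1) := hε4.trans aux_quarter
  -- decompose T into fibers of the type map
  set f : (Fin n → Fin d) → (Fin d → ℕ) := fun jn j => occ j jn with hf
  have hcardT : T.card = ∑ N ∈ T.image f, (T.filter fun jn => f jn = N).card :=
    Finset.card_eq_sum_card_image f T
  -- image bound
  have himage : (T.image f).card ≤ (n+1)^d := by
    have hbound : ∀ N ∈ T.image f, ∀ j, N j ≤ n := by
      intro N hN j
      obtain ⟨jn, _, hjn⟩ := Finset.mem_image.mp hN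
      rw [← hjn]
      calc occ j jn ≤ Finset.univ.card := Finset.card_filter_le _ _
        _ = n := by simp
    calc (T.image f).card
        ≤ (Finset.univ : Finset (Fin d → Fin (n+1))).card := by
          apply Finset.card_le_card_of_injOn
            (fun N j => (⟨min (N j) n, by omega⟩ : Fin (n+1)))
          · intro N _; exact Finset.mem_univ _
          · intro N hN N' hN' hEq
            funext j
            have h1 := congrFun hEq j
            have h2 : min (N j) n = min (N' j) n := congrArg Fin.val h1
            rw [min_eq_left (hbound N hN j), min_eq_left (hbound N' hN' j)] at h2
            exact h2
      _ = (n+1)^d := by simp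
  -- fiber bound
  have hfiber : ∀ N ∈ T.image f, ((T.filter fun jn => f jn = N).card : ℝ) ≤ B := by
    intro N hN
    obtain ⟨jn₀, hjn₀T, hjn₀⟩ := Finset.mem_image.mp hN
    have hNocc : ∀ j, occ j jn₀ = N j := fun j => congrFun hjn₀ j
    have hNsum : ∑ j, N j = n := by
      rw [← Finset.sum_congr rfl (fun j _ => hNocc j)]
      exact aux_occ_sum jn₀
    have htyp : ∀ j, |(N j : ℝ) - n * q j| ≤ δ * Real.sqrt n := by
      intro j
      have := (Finset.mem_filter.mp hjn₀T).2 j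
      rw [hNocc j] at this
      exact this
    set t : Fin d → ℝ := fun j => (N j : ℝ) / n with hts
    have ht0 : ∀ j, 0 ≤ t j := fun j => by positivity
    have hNn : ∀ j, N j ≤ n := by
      intro j
      calc N j ≤ ∑ k, N k := Finset.single_le_sum (fun k _ => Nat.zero_le _) (Finset.mem_univ j)
        _ = n := hNsum
    have ht1 : ∀ j, t j ≤ 1 := by
      intro j
      rw [hts]
      rw [div_le_one (by exact_mod_cast hn0)]
      exact_mod_cast hNn j
    have hnsq : ((n:ℝ)) = Real.sqrt n * Real.sqrt n :=
      (Real.mul_self_sqrt (Nat.cast_nonneg n)).symm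
    have htq : ∀ j, |t j - q j| ≤ ε := by
      intro j
      have h1 : t j - q j = ((N j : ℝ) - n * q j) / n := by
        rw [hts]; field_simp
      rw [h1, abs_div, abs_of_pos (show (0:ℝ) < n by exact_mod_cast hn0)]
      rw [div_le_iff₀ (show (0:ℝ) < n by exact_mod_cast hn0)]
      calc |(N j : ℝ) - n * q j| ≤ δ * Real.sqrt n := htyp j
        _ = ε * n := by
            rw [hεdef, div_mul_eq_mul_div, eq_div_iff hsn.ne', mul_assoc,
              Real.mul_self_sqrt (Nat.cast_nonneg n)]
    -- the subset of sequences with type exactly N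
    set S := Finset.univ.filter fun jn : Fin n → Fin d => ∀ j, occ j jn = N j with hS
    have hsub : (T.filter fun jn => f jn = N) ⊆ S := by
      intro jn hjn
      rw [hS, Finset.mem_filter]
      exact ⟨Finset.mem_univ _, fun j => congrFun (Finset.mem_filter.mp hjn).2 j⟩
    have hP0 : 0 < ∏ j, t j ^ (N j) := by
      apply Finset.prod_pos
      intro j _
      rcases Nat.eq_zero_or_pos (N j) with h | h
      · rw [h, pow_zero]; norm_num
      · apply pow_pos
        rw [hts]
        apply div_pos (by exact_mod_cast h) (by exact_mod_cast hn0)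
    have hcount_t := aux_count_type hn0 N hNsum
    have hScard : (S.card : ℝ) ≤ 1 / ∏ j, t j ^ (N j) := by
      rw [le_div_iff₀ hP0]
      exact hcount_t
    set E : ℝ := ∑ j, (N j : ℝ) * Real.logb 2 (t j) with hE
    have hPE : ∏ j, t j ^ (N j) = (2:ℝ) ^ E := by
      rw [hE, Real.rpow_sum_of_pos (by norm_num : (0:ℝ) < 2)]
      apply Finset.prod_congr rfl
      intro j _
      rcases Nat.eq_zero_or_pos (N j) with h | h
      · rw [h]; simp
      · have htj : 0 < t j := by
          rw [hts]
          exact div_pos (by exact_mod_cast h) (by exact_mod_cast hn0)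
        conv_lhs => rw [← Real.rpow_logb (by norm_num : (0:ℝ)<2) (by norm_num) htj]
        rw [← Real.rpow_natCast ((2:ℝ) ^ Real.logb 2 (t j)) (N j),
          ← Real.rpow_mul (by norm_num : (0:ℝ) ≤ 2), mul_comm]
    have hHs : ∑ j, -(q j * Real.logb 2 (q j)) = H := by
      show _ = -∑ j, q j * Real.logb 2 (q j)
      rw [← Finset.sum_neg_distrib]
    have hEineq : -E ≤ (n:ℝ) * H + (n:ℝ) * d * (-(ε * Real.logb 2 ε)) := by
      have hNe : ∀ j, (N j : ℝ) = n * t j := by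
        intro j; rw [hts]; field_simp
      calc -E = ∑ j, (n:ℝ) * (-(t j * Real.logb 2 (t j))) := by
            rw [hE, ← Finset.sum_neg_distrib]
            apply Finset.sum_congr rfl
            intro j _
            rw [hNe j]; ring
        _ ≤ ∑ j, (n:ℝ) * (-(q j * Real.logb 2 (q j)) + -(ε * Real.logb 2 ε)) := by
            apply Finset.sum_le_sum
            intro j _
            exact mul_le_mul_of_nonneg_left
              (aux_eta_logb (ht0 j) (ht1 j) (hq0 j) (hq1 j) (htq j) hε0 hεe)
              (Nat.cast_nonneg n)
        _ = (n:ℝ) * H + (n:ℝ) * d * (-(ε * Real.logb 2 ε)) := by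
            simp only [mul_add, Finset.sum_add_distrib, ← Finset.mul_sum, hHs,
              Finset.sum_const, Finset.card_univ, Fintype.card_fin, nsmul_eq_mul]
            ring
    calc ((T.filter fun jn => f jn = N).card : ℝ)
        ≤ (S.card : ℝ) := by exact_mod_cast Finset.card_le_card hsub
      _ ≤ 1 / ∏ j, t j ^ (N j) := hScard
      _ = (2:ℝ) ^ (-E) := by
          rw [hPE, Real.rpow_neg (by norm_num : (0:ℝ) ≤ 2), one_div]
      _ ≤ B := by
          rw [hBdef]
          exact Real.rpow_le_rpow_of_exponent_le one_le_two hEineq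
  calc (T.card : ℝ)
      = ∑ N ∈ T.image f, ((T.filter fun jn => f jn = N).card : ℝ) := by
        rw [hcardT]; push_cast; rfl
    _ ≤ ∑ _N ∈ T.image f, B := Finset.sum_le_sum hfiber
    _ = (T.image f).card * B := by rw [Finset.sum_const, nsmul_eq_mul]
    _ ≤ (((n+1)^d : ℕ) : ℝ) * B := by
        apply mul_le_mul_of_nonneg_right _ hB0
        exact_mod_cast himage
    _ = ((n:ℝ)+1)^d * B := by push_cast; ring

end QIT
end
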